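/- If (d; m_1, ..., m_r) satisfies the Noether equalities and ε = m_1 + m_2 + m_3 - d, then the tuple (d - ε; m_1 - ε, m_2 - ε, m_3 - ε, m_4, ..., m_r) also satisfies the Noether equalities. -/

import Mathlib

/-- One step of Hudson's test preserves the Noether equalities:
if `(d; m_1, ..., m_r)` satisfies them and `ε = m_1 + m_2 + m_3 - d`, then
`(d - ε; m_1 - ε, m_2 - ε, m_3 - ε, m_4, ..., m_r)` satisfies them as well. -/
theorem hudson_step_preserves_noether (r : ℕ) (hr : 3 ≤ r) (d : ℤ) (m : ℕ → ℤ)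
    (h1 : ∑ i ∈ Finset.range r, m i = 3 * (d - 1))
    (h2 : ∑ i ∈ Finset.range r, (m i) ^ 2 = d ^ 2 - 1) :
    ∀ ε n, ε = m 0 + m 1 + m 2 - d → n = (fun i => if i < 3 then m i - ε else m i) →
      (∑ i ∈ Finset.range r, n i = 3 * ((d - ε) - 1) ∧
       ∑ i ∈ Finset.range r, (n i) ^ 2 = (d - ε) ^ 2 - 1) := by
  intro ε n hε hn
  subst hn
  have hfil : (Finset.range r).filter (fun i => i < 3) = Finset.range 3 := by
    ext i
    simp only [Finset.mem_filter, Finset.mem_range]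
    omega
  have e1 : ∀ i, (if i < 3 then m i - ε else m i) = m i + (if i < 3 then -ε else 0) := by
    intro i; split <;> ring
  have e2 : ∀ i, (if i < 3 then m i - ε else m i) ^ 2
      = m i ^ 2 + (if i < 3 then -2 * ε * m i + ε ^ 2 else 0) := by
    intro i; split <;> ring
  have key1 : ∑ i ∈ Finset.range r, (if i < 3 then m i - ε else m i)
      = (∑ i ∈ Finset.range r, m i) - 3 * ε := by
    simp_rw [e1, Finset.sum_add_distrib, Finset.sum_ite, Finset.sum_const_zero, hfil,
      Finset.sum_const]
    simp; ring
  have key2 : ∑ i ∈ Finset.range r, (if i < 3 then m i - ε else m i) ^ 2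
      = (∑ i ∈ Finset.range r, m i ^ 2) + (-2 * ε * (m 0 + m 1 + m 2) + 3 * ε ^ 2) := by
    simp_rw [e2, Finset.sum_add_distrib, Finset.sum_ite, Finset.sum_const_zero, hfil]
    rw [Finset.sum_range_succ, Finset.sum_range_succ, Finset.sum_range_one]
    ring
  constructor
  · simp only [key1, h1]; ring
  · simp only [key2, h2]
    have : m 0 + m 1 + m 2 = ε + d := by linarith
    rw [this]; ring
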